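/- Let R be a (not necessarily commutative) ring containing elements b and b† satisfying b·b† − b†·b = 1. Then for all natural numbers p and q, the commutator satisfies b^p·(b†)^q − (b†)^q·b^p = ∑_{s=1}^{min(p,q)} (s!·C(p,s)·C(q,s)) • ((b†)^{q−s}·b^{p−s}), where C(·,·) denotes the binomial coefficient and • denotes scalar multiplication by a natural number. -/
import Mathlib

private lemma ccr_aux1 {R : Type*} [Ring R] (b bd : R)
    (h : b * bd - bd * b = 1) (q : ℕ) :
    b * bd ^ (q + 1) = bd ^ (q + 1) * b + (q + 1) • bd ^ q := by
  have hb : b * bd = bd * b + 1 := by rw [sub_eq_iff_eq_add.mp h, add_comm]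
  induction q with
  | zero => simpa using hb
  | succ q ih =>
    have h2 : b * bd ^ (q + 2) = (b * bd ^ (q + 1)) * bd := by
      rw [pow_succ, ← mul_assoc]
    rw [h2, ih, add_mul, mul_assoc, hb, smul_mul_assoc, ← pow_succ, mul_add,
      ← mul_assoc, ← pow_succ, mul_one]
    have e : (q + 1 + 1) • bd ^ (q + 1) = (q + 1) • bd ^ (q + 1) + bd ^ (q + 1) := by
      rw [add_smul, one_smul]
    rw [e]
    abel

private lemma ccr_aux2 {R : Type*} [Ring R] (b bd : R)
    (h : b * bd - bd * b = 1) (q : ℕ) :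
    b * bd ^ q = bd ^ q * b + q • bd ^ (q - 1) := by
  cases q with
  | zero => simp
  | succ q => simpa using ccr_aux1 b bd h q

private lemma ccr_key {R : Type*} [Ring R] (b bd : R)
    (h : b * bd - bd * b = 1) (p q : ℕ) :
    b ^ p * bd ^ q =
      ∑ s ∈ Finset.range (p + 1),
        (s.factorial * p.choose s * q.choose s) • (bd ^ (q - s) * b ^ (p - s)) := by
  induction p with
  | zero => simp
  | succ p ih =>
    have h1 : b ^ (p + 1) * bd ^ q = b * (b ^ p * bd ^ q) := by
      rw [pow_succ', mul_assoc]
    rw [h1, ih, Finset.mul_sum]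
    have h2 : ∀ s ∈ Finset.range (p + 1),
        b * ((s.factorial * p.choose s * q.choose s) • (bd ^ (q - s) * b ^ (p - s)))
          = (s.factorial * p.choose s * q.choose s) •
              (bd ^ (q - s) * b ^ (p + 1 - s))
            + (s.factorial * p.choose s * q.choose s * (q - s)) •
              (bd ^ (q - (s + 1)) * b ^ (p + 1 - (s + 1))) := by
      intro s hs
      have hsp : s ≤ p := by simpa using Nat.lt_succ_iff.mp (Finset.mem_range.mp hs)
      have e1 : p + 1 - s = (p - s) + 1 := by omega
      have e2 : p + 1 - (s + 1) = p - s := by omega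
      have e3 : q - (s + 1) = q - s - 1 := by omega
      rw [mul_smul_comm, ← mul_assoc, ccr_aux2 b bd h (q - s)]
      rw [add_mul, smul_add, mul_assoc (bd ^ (q - s)), ← pow_succ', smul_mul_assoc, smul_smul, e1, e2, e3,
        mul_assoc, mul_assoc]
    rw [Finset.sum_congr rfl h2, Finset.sum_add_distrib]
    -- RHS manipulation
    rw [Finset.sum_range_succ' (fun s => (s.factorial * (p+1).choose s * q.choose s) •
        (bd ^ (q - s) * b ^ (p + 1 - s))) (p + 1)]
    have h3 : ∀ s ∈ Finset.range (p + 1),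
        ((s+1).factorial * (p+1).choose (s+1) * q.choose (s+1)) •
            (bd ^ (q - (s+1)) * b ^ (p + 1 - (s+1)))
          = ((s+1).factorial * p.choose (s+1) * q.choose (s+1)) •
              (bd ^ (q - (s+1)) * b ^ (p + 1 - (s+1)))
            + (s.factorial * p.choose s * q.choose s * (q - s)) •
              (bd ^ (q - (s+1)) * b ^ (p + 1 - (s+1))) := by
      intro s _
      rw [← add_smul]
      congr 1
      have hc : q.choose (s+1) * (s+1) = q.choose s * (q - s) :=
        Nat.choose_succ_right_eq q s
      calc (s+1).factorial * (p+1).choose (s+1) * q.choose (s+1)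
          = (s+1).factorial * p.choose (s+1) * q.choose (s+1)
            + s.factorial * p.choose s * (q.choose (s+1) * (s+1)) := by
            rw [Nat.choose_succ_succ, Nat.factorial_succ]; ring
        _ = _ := by rw [hc]; ring
    rw [Finset.sum_congr rfl h3, Finset.sum_add_distrib]
    have h4 : ∑ s ∈ Finset.range (p + 1),
        (s.factorial * p.choose s * q.choose s) • (bd ^ (q - s) * b ^ (p + 1 - s))
      = ∑ s ∈ Finset.range (p + 1),
          ((s+1).factorial * p.choose (s+1) * q.choose (s+1)) •
            (bd ^ (q - (s+1)) * b ^ (p + 1 - (s+1)))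
        + (Nat.factorial 0 * (p+1).choose 0 * q.choose 0) •
            (bd ^ (q - 0) * b ^ (p + 1 - 0)) := by
      rw [Finset.sum_range_succ' (fun s => (s.factorial * p.choose s * q.choose s) •
          (bd ^ (q - s) * b ^ (p + 1 - s))) p,
        Finset.sum_range_succ]
      simp [Nat.choose_succ_self]
    rw [h4]
    abel

/-- Commutator identity `[b^p, (b†)^q]` for a canonical pair `b·b† − b†·b = 1`
in a (not necessarily commutative) ring. -/
theorem commutator_pow_of_ccr {R : Type*} [Ring R] (b bd : R)
    (h : b * bd - bd * b = 1) (p q : ℕ) :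
    b ^ p * bd ^ q - bd ^ q * b ^ p =
      ∑ s ∈ Finset.Icc 1 (min p q),
        (s.factorial * p.choose s * q.choose s) • (bd ^ (q - s) * b ^ (p - s)) := by
  have hins : Finset.range (p + 1) = insert 0 (Finset.Icc 1 p) := by
    ext x; simp [Finset.mem_range, Finset.mem_Icc]; omega
  have h0 : (0 : ℕ) ∉ Finset.Icc 1 p := by simp
  rw [ccr_key b bd h p q, hins, Finset.sum_insert h0]
  simp only [Nat.factorial_zero, Nat.choose_zero_right, mul_one, one_mul, one_smul,
    Nat.sub_zero, pow_zero, mul_one]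
  rw [add_sub_cancel_left]
  refine (Finset.sum_subset (Finset.Icc_subset_Icc_right (min_le_left p q)) ?_).symm
  intro s hs hns
  have hq : q < s := by
    simp [Finset.mem_Icc] at hs hns
    omega
  rw [Nat.choose_eq_zero_of_lt hq, mul_zero, zero_smul]
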